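/- Let (𝒜, ℬ) be a small cotorsion pair in a Grothendieck category 𝒢 with a generator G ∈ 𝒜, and generating monomorphisms I. Then a morphism p belongs to I-inj (has the right lifting property with respect to all maps in I) if and only if p is an epimorphism with kernel in ℬ. -/

import Mathlib

open CategoryTheory Limits

universe v u

variable {𝒢 : Type u} [Category.{v} 𝒢] [Abelian 𝒢]

/-- `Ext¹(A, B) = 0`, expressed by the splitting of every short exact sequence
`0 → B → T → A → 0`. -/
def Ext1IsZero (A B : 𝒢) : Prop :=
  ∀ (T : 𝒢) (k : B ⟶ T) (r : T ⟶ A) (w : k ≫ r = 0),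
    Mono k → Epi r → (ShortComplex.mk k r w).Exact → ∃ s : A ⟶ T, s ≫ r = 𝟙 A

/-- `(𝒜, ℬ)` is a cotorsion pair: each class is the `Ext¹`-orthogonal of the other. -/
structure IsCotorsionPair (𝒜 ℬ : Set 𝒢) : Prop where
  mem_left : ∀ X : 𝒢, X ∈ 𝒜 ↔ ∀ B ∈ ℬ, Ext1IsZero X B
  mem_right : ∀ Y : 𝒢, Y ∈ ℬ ↔ ∀ A ∈ 𝒜, Ext1IsZero A Y

/-- A set `I` of generating monomorphisms exhibiting a cotorsion pair `(𝒜, ℬ)` as *small*: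
the family `f i : dom i ⟶ cod i` consists of monomorphisms, it contains the map
`0 ⟶ G` for a generator `G ∈ 𝒜` (the index `i₀`), the cokernels of its members
cogenerate the pair, and surjectivity of all `Hom(f i, X)` forces `X ∈ ℬ`. -/
structure SmallCotorsionData (𝒜 ℬ : Set 𝒢) where
  ι : Type v
  dom : ι → 𝒢
  cod : ι → 𝒢
  f : ∀ i, dom i ⟶ cod i
  mono : ∀ i, Mono (f i)
  i₀ : ι
  dom_i₀_zero : IsZero (dom i₀)
  cod_i₀_separator : IsSeparator (cod i₀)
  cod_i₀_mem : cod i₀ ∈ 𝒜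
  cogenerates : ∀ Y : 𝒢, Y ∈ ℬ ↔ ∀ i, Ext1IsZero (cokernel (f i)) Y
  detects : ∀ X : 𝒢,
    (∀ i, Function.Surjective (fun g : cod i ⟶ X => f i ≫ g)) → X ∈ ℬ

/-- The key lifting construction: if `p` is an epi with kernel `K`, `f : D ⟶ C'` is a mono,
and `Ext¹(coker f, K) = 0`, then `p` has the right lifting property against `f`. -/
theorem liftingOfExt1 {D C' X Y : 𝒢} (f : D ⟶ C') [Mono f] (p : X ⟶ Y) [Epi p]
    (hext : Ext1IsZero (cokernel f) (kernel p))
    (t : D ⟶ X) (b : C' ⟶ Y) (w : t ≫ p = f ≫ b) :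
    ∃ l : C' ⟶ X, f ≫ l = t ∧ l ≫ p = b := by
  -- The pullback `P = C' ×_Y X`.
  let P := pullback b p
  let q : P ⟶ C' := pullback.fst b p
  let sd : P ⟶ X := pullback.snd b p
  haveI : Epi q := by
    dsimp only [q]; infer_instance
  -- the induced map from `D` into the pullback
  let u : D ⟶ P := pullback.lift f t w.symm
  have hu_fst : u ≫ q = f := pullback.lift_fst _ _ _
  have hu_snd : u ≫ sd = t := pullback.lift_snd _ _ _
  haveI : Mono u := by
    have : Mono (u ≫ q) := by rw [hu_fst]; infer_instance
    exact mono_of_mono u q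
  -- the kernel of `p`, mapped into `P`
  let κ : kernel p ⟶ P := pullback.lift 0 (kernel.ι p) (by simp)
  have hκ_fst : κ ≫ q = 0 := pullback.lift_fst _ _ _
  have hκ_snd : κ ≫ sd = kernel.ι p := pullback.lift_snd _ _ _
  haveI : Mono κ := by
    have : Mono (κ ≫ sd) := by rw [hκ_snd]; infer_instance
    exact mono_of_mono κ sd
  -- `κ` is a kernel of `q`
  have κIsKernel : IsLimit (KernelFork.ofι κ hκ_fst) := by
    refine KernelFork.IsLimit.ofι κ hκ_fst
      (fun {W'} g' hg' => kernel.lift p (g' ≫ sd) ?_)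
      (fun {W'} g' hg' => ?_) (fun {W'} g' hg' m hm => ?_)
    · rw [Category.assoc, ← pullback.condition, ← Category.assoc, hg', zero_comp]
    · apply pullback.hom_ext
      · show (_ ≫ κ) ≫ q = g' ≫ q
        simp only [Category.assoc, hκ_fst, comp_zero, hg']
      · show (_ ≫ κ) ≫ sd = g' ≫ sd
        simp only [Category.assoc, hκ_snd, kernel.lift_ι]
    · rw [← cancel_mono (kernel.ι p), kernel.lift_ι, ← hκ_snd, ← Category.assoc, hm]
  -- the cokernel of `u`
  let N := cokernel u
  let π : P ⟶ N := cokernel.π u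
  let j : kernel p ⟶ N := κ ≫ π
  let e' : N ⟶ cokernel f := cokernel.desc u (q ≫ cokernel.π f)
    (by rw [← Category.assoc, hu_fst, cokernel.condition])
  have hπe' : π ≫ e' = q ≫ cokernel.π f := cokernel.π_desc _ _ _
  have hje' : j ≫ e' = 0 := by
    dsimp only [j]; rw [Category.assoc, hπe', ← Category.assoc, hκ_fst, zero_comp]
  -- `u` is the kernel of `π`
  have Su_exact : (ShortComplex.mk u π (cokernel.condition u)).Exact :=
    ShortComplex.exact_of_g_is_cokernel _ (cokernelIsCokernel u)
  have uIsKernel : IsLimit (KernelFork.ofι u (cokernel.condition u)) := Su_exact.fIsKernel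
  -- `f` is the kernel of `cokernel.π f`
  have Sf_exact : (ShortComplex.mk f (cokernel.π f) (cokernel.condition f)).Exact :=
    ShortComplex.exact_of_g_is_cokernel _ (cokernelIsCokernel f)
  have fIsKernel : IsLimit (KernelFork.ofι f (cokernel.condition f)) := Sf_exact.fIsKernel
  -- `j` is a mono
  haveI hmono_j : Mono j := by
    apply Preadditive.mono_of_cancel_zero
    intro W z hz
    obtain ⟨w', hw'⟩ := KernelFork.IsLimit.lift' uIsKernel (z ≫ κ)
      (by dsimp only [j] at hz; rw [Category.assoc]; exact hz)
    have hw0 : w' = 0 := by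
      rw [← cancel_mono f, zero_comp, ← hu_fst, ← Category.assoc]
      dsimp at hw'
      rw [hw', Category.assoc, hκ_fst, comp_zero]
    have : z ≫ κ = 0 := by
      dsimp at hw'
      rw [← hw', hw0, zero_comp]
    rwa [← cancel_mono κ, zero_comp]
  -- `e'` is an epi
  haveI hepi_e' : Epi e' := by
    have : Epi (π ≫ e') := by rw [hπe']; exact epi_comp _ _
    exact epi_of_epi π e'
  -- exactness of `0 → K → N → coker f → 0` at `N`
  have hexactN : (ShortComplex.mk j e' hje').Exact := by
    rw [ShortComplex.exact_iff_exact_up_to_refinements]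
    intro A x hx
    dsimp at x hx ⊢
    obtain ⟨A', π₁, hπ₁, x₁, hx₁⟩ := surjective_up_to_refinements_of_epi π x
    have hx₁f : (x₁ ≫ q) ≫ cokernel.π f = 0 := by
      rw [Category.assoc, ← hπe', ← Category.assoc, ← hx₁, Category.assoc, hx, comp_zero]
    obtain ⟨d, hd⟩ := KernelFork.IsLimit.lift' fIsKernel (x₁ ≫ q) hx₁f
    dsimp at hd
    have hx₂q : (x₁ - d ≫ u) ≫ q = 0 := by
      rw [Preadditive.sub_comp, Category.assoc, hu_fst, hd, sub_self]
    obtain ⟨y, hy⟩ := KernelFork.IsLimit.lift' κIsKernel (x₁ - d ≫ u) hx₂q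
    dsimp at hy
    refine ⟨A', π₁, hπ₁, y, ?_⟩
    rw [hx₁]
    dsimp only [j]
    rw [← Category.assoc, hy, Preadditive.sub_comp, Category.assoc,
      cokernel.condition, comp_zero, sub_zero]
  -- apply the `Ext¹` vanishing to get a splitting
  obtain ⟨s₀, hs₀⟩ := hext N j e' hje' hmono_j hepi_e' hexactN
  -- get a retraction `ρ : N ⟶ kernel p` of `j`
  have jIsKernel : IsLimit (KernelFork.ofι j hje') := hexactN.fIsKernel
  have hδ : (𝟙 N - e' ≫ s₀) ≫ e' = 0 := by
    rw [Preadditive.sub_comp, Category.id_comp, Category.assoc, hs₀, Category.comp_id, sub_self]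
  obtain ⟨ρ, hρ⟩ := KernelFork.IsLimit.lift' jIsKernel (𝟙 N - e' ≫ s₀) hδ
  dsimp at hρ
  have hjρ : j ≫ ρ = 𝟙 (kernel p) := by
    rw [← cancel_mono j, Category.assoc, hρ, Preadditive.comp_sub, Category.comp_id,
      Category.id_comp, ← Category.assoc, hje', zero_comp, sub_zero]
  -- the correction endomorphism of `P`
  let σ : P ⟶ P := 𝟙 P - π ≫ ρ ≫ κ
  have hjρ' : (κ ≫ π) ≫ ρ = 𝟙 (kernel p) := hjρ
  have hκσ : κ ≫ σ = 0 := by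
    dsimp only [σ]
    rw [Preadditive.comp_sub, Category.comp_id]
    simp only [← Category.assoc]
    rw [hjρ', Category.id_comp, sub_self]
  have hkerσ : kernel.ι q ≫ σ = 0 := by
    obtain ⟨w', hw'⟩ := KernelFork.IsLimit.lift' κIsKernel (kernel.ι q) (kernel.condition q)
    dsimp at hw'
    rw [← hw', Category.assoc, hκσ, comp_zero]
  -- descend `σ` to a section `s : C' ⟶ P` of `q`
  let s : C' ⟶ P := Abelian.epiDesc q σ hkerσ
  have hqs : q ≫ s = σ := Abelian.comp_epiDesc q σ hkerσ
  have hsq : s ≫ q = 𝟙 C' := by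
    rw [← cancel_epi q, ← Category.assoc, hqs, Category.comp_id]
    dsimp only [σ]
    rw [Preadditive.sub_comp, Category.id_comp, Category.assoc, Category.assoc,
      hκ_fst, comp_zero, comp_zero, sub_zero]
  refine ⟨s ≫ sd, ?_, ?_⟩
  · have h2 : u ≫ π = 0 := cokernel.condition u
    have h3 : u ≫ (π ≫ ρ ≫ κ) ≫ sd = 0 := by
      simp only [← Category.assoc]
      rw [h2, zero_comp, zero_comp, zero_comp]
    rw [← hu_fst, Category.assoc, ← Category.assoc q s sd, hqs]
    dsimp only [σ]
    rw [Preadditive.sub_comp, Category.id_comp, Preadditive.comp_sub, h3, sub_zero, hu_snd]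
  · rw [Category.assoc, ← pullback.condition, ← Category.assoc, hsq, Category.id_comp]

/-- For a small cotorsion pair `(𝒜, ℬ)` in a Grothendieck category with
a generator `G ∈ 𝒜` and generating monomorphisms `I`, a morphism `p` lies in `I`-inj
(has the right lifting property with respect to every map of `I`) if and only if
`p` is an epimorphism with kernel in `ℬ`. -/
theorem stmt3 [HasColimits 𝒢] [AB5 𝒢] (𝒜 ℬ : Set 𝒢)
    (hpair : IsCotorsionPair 𝒜 ℬ) (I : SmallCotorsionData 𝒜 ℬ)
    {X Y : 𝒢} (p : X ⟶ Y) :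
    (∀ i, HasLiftingProperty (I.f i) p) ↔ (Epi p ∧ kernel p ∈ ℬ) := by
  constructor
  · intro h
    constructor
    · -- `p` is an epi: lift maps from the separator `cod i₀`
      refine ⟨fun {Z} u v huv => ?_⟩
      refine I.cod_i₀_separator.def u v (fun g => ?_)
      have w : (0 : I.dom I.i₀ ⟶ X) ≫ p = I.f I.i₀ ≫ g :=
        I.dom_i₀_zero.eq_of_src _ _
      have sq : CommSq (0 : I.dom I.i₀ ⟶ X) (I.f I.i₀) p g := ⟨w⟩
      obtain ⟨l⟩ := ((h I.i₀).sq_hasLift sq).exists_lift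
      rw [← l.fac_right, Category.assoc, Category.assoc, huv]
    · -- the kernel of `p` is in `ℬ`
      apply I.detects
      intro i g
      have w : (g ≫ kernel.ι p) ≫ p = I.f i ≫ (0 : I.cod i ⟶ Y) := by
        rw [Category.assoc, kernel.condition, comp_zero, comp_zero]
      have sq : CommSq (g ≫ kernel.ι p) (I.f i) p (0 : I.cod i ⟶ Y) := ⟨w⟩
      obtain ⟨l⟩ := ((h i).sq_hasLift sq).exists_lift
      refine ⟨kernel.lift p l.l l.fac_right, ?_⟩
      have hm := I.mono i
      dsimp only
      rw [← cancel_mono (kernel.ι p), Category.assoc, kernel.lift_ι, l.fac_left]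
  · rintro ⟨hepi, hK⟩ i
    haveI := hepi
    haveI := I.mono i
    have hext := (I.cogenerates _).1 hK i
    refine ⟨fun {t b} sq => ?_⟩
    obtain ⟨l, hl1, hl2⟩ := liftingOfExt1 (I.f i) p hext t b sq.w
    exact CommSq.HasLift.mk' ⟨l, hl1, hl2⟩
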